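/- Let K be a perfect field of characteristic 2 and (V, Q) a finite-dimensional quadratic space with Q non-degenerate (not decomposing as Q' ⊕ 0). Then V contains a nonzero degenerate vector (for the polar form B) if and only if dim V is odd, and in that case the degenerate vectors form a 1-dimensional subspace. -/

import Mathlib

open QuadraticMap Module

section Aux

variable {K : Type*} [Field K]

private lemma span_pair_finrank {V : Type*} [AddCommGroup V] [Module K V]
    {v w : V} (h : LinearIndependent K ![v, w]) :
    finrank K ↥(Submodule.span K {v, w}) = 2 := by
  have h1 : Set.range ![v, w] = {v, w} := by
    ext y
    simp [Matrix.range_cons, Matrix.range_empty, or_comm]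
  rw [← h1]
  simpa using finrank_span_eq_card h

private lemma alt_parity : ∀ (n : ℕ) (V : Type u) [AddCommGroup V] [Module K V]
    [FiniteDimensional K V], finrank K V = n → ∀ (B : LinearMap.BilinForm K V),
    (∀ x, B x x = 0) →
    finrank K (LinearMap.ker B) % 2 = finrank K V % 2 := by
  intro n
  induction n using Nat.strong_induction_on with
  | _ n ih =>
    intro V _ _ _ hn B halt
    have hskew : ∀ x y : V, B x y = - B y x := by
      intro x y
      have h := halt (x + y)
      simp only [map_add, LinearMap.add_apply, halt x, halt y] at h
      linear_combination h
    by_cases hk : LinearMap.ker B = ⊤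
    · rw [hk, finrank_top]
    · obtain ⟨v, hv⟩ : ∃ v : V, B v ≠ 0 := by
        by_contra h
        push_neg at h
        exact hk (by ext x; simp [LinearMap.mem_ker, h x])
      obtain ⟨w, hw⟩ : ∃ w : V, B v w ≠ 0 := by
        by_contra h
        push_neg at h
        exact hv (LinearMap.ext h)
      have hwv : B w v ≠ 0 := by rw [hskew w v]; simpa using hw
      set U : Submodule K V := LinearMap.ker (B.flip v) ⊓ LinearMap.ker (B.flip w) with hU
      have hmemU : ∀ x : V, x ∈ U ↔ B x v = 0 ∧ B x w = 0 := by
        intro x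
        simp [hU, LinearMap.mem_ker, LinearMap.flip_apply]
      set P : Submodule K V := Submodule.span K {v, w} with hP
      have hind : LinearIndependent K ![v, w] := by
        rw [LinearIndependent.pair_iff]
        intro s t hst
        have h1 : B (s • v + t • w) v = 0 := by rw [hst]; simp
        have h2 : B (s • v + t • w) w = 0 := by rw [hst]; simp
        simp only [map_add, _root_.map_smul, LinearMap.add_apply, LinearMap.smul_apply,
          halt v, halt w, smul_zero, zero_add, add_zero, mul_zero, smul_eq_mul] at h1 h2
        constructor
        · exact (mul_eq_zero.mp h2).resolve_right hw
        · exact (mul_eq_zero.mp h1).resolve_right hwv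
      have hPfin : finrank K ↥P = 2 := span_pair_finrank hind
      have hdisj : Disjoint P U := by
        rw [Submodule.disjoint_def]
        intro x hxP hxU
        obtain ⟨a, b, hab⟩ := Submodule.mem_span_pair.mp hxP
        obtain ⟨h1, h2⟩ := (hmemU x).mp hxU
        rw [← hab] at h1 h2
        simp only [map_add, _root_.map_smul, LinearMap.add_apply, LinearMap.smul_apply,
          halt v, halt w, smul_zero, zero_add, add_zero, mul_zero, smul_eq_mul] at h1 h2
        have hb : b = 0 := (mul_eq_zero.mp h1).resolve_right hwv
        have ha : a = 0 := (mul_eq_zero.mp h2).resolve_right hw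
        rw [← hab, ha, hb]
        simp
      -- dimension bound for U
      have hUker : U = LinearMap.ker ((B.flip v).prod (B.flip w)) := by
        rw [LinearMap.ker_prod]
      have hUge : finrank K V ≤ finrank K ↥U + 2 := by
        have h1 := LinearMap.finrank_range_add_finrank_ker ((B.flip v).prod (B.flip w))
        have h2 : finrank K ↥(LinearMap.range ((B.flip v).prod (B.flip w))) ≤ 2 := by
          have := Submodule.finrank_le (LinearMap.range ((B.flip v).prod (B.flip w)))
          simpa [Module.finrank_prod] using this
        rw [hUker]
        omega
      have hcompl : IsCompl P U := by
        refine ⟨hdisj, codisjoint_iff.mpr ?_⟩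
        have hsum := Submodule.finrank_sup_add_finrank_inf_eq P U
        rw [disjoint_iff.mp hdisj, finrank_bot, add_zero] at hsum
        apply Submodule.eq_top_of_finrank_eq
        have hle := Submodule.finrank_le (P ⊔ U)
        omega
      have hdim : finrank K ↥P + finrank K ↥U = finrank K V :=
        Submodule.finrank_add_eq_of_isCompl hcompl
      -- restrict B to U
      set B' : LinearMap.BilinForm K ↥U := B.restrict U with hB'
      have halt' : ∀ x : ↥U, B' x x = 0 := fun x => halt x
      have hkerle : LinearMap.ker B ≤ U := by
        intro x hx
        rw [LinearMap.mem_ker] at hx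
        rw [hmemU]
        constructor <;> rw [hx] <;> simp
      have hkerB' : LinearMap.ker B' = Submodule.comap U.subtype (LinearMap.ker B) := by
        ext x
        simp only [LinearMap.mem_ker, Submodule.mem_comap, Submodule.coe_subtype]
        constructor
        · intro h
          ext z
          have hz : (z : V) ∈ P ⊔ U := by rw [codisjoint_iff.mp hcompl.codisjoint]; trivial
          obtain ⟨p, hp, u, hu, hpu⟩ := Submodule.mem_sup.mp hz
          have hxu : B (x : V) u = 0 := by
            have := congrFun (congrArg (fun f => f.toFun) h) ⟨u, hu⟩
            simpa [hB', LinearMap.BilinForm.restrict_apply] using this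
          have hxp : B (x : V) p = 0 := by
            obtain ⟨a, b, hab⟩ := Submodule.mem_span_pair.mp hp
            obtain ⟨h1, h2⟩ := (hmemU (x : V)).mp x.2
            rw [← hab]
            simp [h1, h2]
          simp only [LinearMap.zero_apply]
          rw [← hpu]
          simp [hxp, hxu]
        · intro h
          ext z
          have : B (x : V) (z : V) = 0 := by rw [h]; simp
          simpa [hB', LinearMap.BilinForm.restrict_apply] using this
      have hkerdim : finrank K (LinearMap.ker B') = finrank K (LinearMap.ker B) := by
        rw [hkerB']
        exact (Submodule.comapSubtypeEquivOfLe hkerle).finrank_eq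
      have hlt : finrank K ↥U < n := by omega
      have hih := ih (finrank K ↥U) hlt ↥U rfl B' halt'
      omega

end Aux

theorem stmt3 {K V : Type*} [Field K] [AddCommGroup V] [Module K V]
    [FiniteDimensional K V] [PerfectField K] (hchar : ringChar K = 2)
    (Q : QuadraticForm K V)
    (hQ : ¬ ∃ V₁ V₂ : Submodule K V, IsCompl V₁ V₂ ∧ V₂ ≠ ⊥ ∧
        (∀ y ∈ V₂, Q y = 0) ∧ (∀ x ∈ V₁, ∀ y ∈ V₂, Q (x + y) = Q x)) :
    ((∃ v : V, v ≠ 0 ∧ ∀ u : V, polar Q v u = 0) ↔ Odd (finrank K V)) ∧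
      (Odd (finrank K V) → finrank K ↥(LinearMap.ker (polarBilin Q)) = 1) := by
  haveI : CharP K 2 := hchar ▸ ringChar.charP K
  haveI : Fact (Nat.Prime 2) := ⟨Nat.prime_two⟩
  have htwo : (2 : K) = 0 := by
    have := CharP.cast_eq_zero K 2
    exact_mod_cast this
  -- membership in the radical
  have hmem : ∀ v : V, v ∈ LinearMap.ker (polarBilin Q) ↔ ∀ u : V, polar Q v u = 0 := by
    intro v
    rw [LinearMap.mem_ker]
    constructor
    · intro h u
      have := congrFun (congrArg (fun f => f.toFun) h) u
      simpa using this
    · intro h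
      ext u
      simpa using h u
  have hQadd : ∀ x y : V, Q (x + y) = Q x + Q y + polar Q x y := by
    intro x y
    simp only [polar]
    ring
  set R : Submodule K V := LinearMap.ker (polarBilin Q) with hR
  -- the subspace of vectors that are degenerate and isotropic
  set W : Submodule K V :=
    { carrier := {v | (∀ u : V, polar Q v u = 0) ∧ Q v = 0}
      add_mem' := by
        rintro a b ⟨ha1, ha2⟩ ⟨hb1, hb2⟩
        refine ⟨fun u => ?_, ?_⟩
        · rw [polar_add_left, ha1 u, hb1 u, add_zero]
        · rw [hQadd, ha2, hb2, polar_comm, hb1 a]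
          ring
      smul_mem' := by
        rintro c a ⟨ha1, ha2⟩
        refine ⟨fun u => ?_, ?_⟩
        · rw [polar_smul_left, ha1 u, smul_zero]
        · rw [QuadraticMap.map_smul, ha2, smul_zero]
      zero_mem' := by
        refine ⟨fun u => ?_, ?_⟩
        · rw [polar_zero_left]
        · exact QuadraticMap.map_zero Q } with hW
  have hmemW : ∀ v : V, v ∈ W ↔ (∀ u : V, polar Q v u = 0) ∧ Q v = 0 := fun v => Iff.rfl
  -- W must be trivial
  have hWbot : W = ⊥ := by
    by_contra hne
    obtain ⟨V₁, hcompl⟩ := Submodule.exists_isCompl W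
    refine hQ ⟨V₁, W, hcompl.symm, hne, fun y hy => ((hmemW y).mp hy).2, ?_⟩
    intro x _ y hy
    rw [hQadd, ((hmemW y).mp hy).2, polar_comm, ((hmemW y).mp hy).1 x]
    ring
  -- the radical has dimension at most 1
  have hRle : ∀ u : V, u ∈ R → u ≠ 0 → R ≤ Submodule.span K {u} := by
    intro u huR hu0
    have hQu : Q u ≠ 0 := by
      intro h
      exact hu0 (by simpa [hWbot] using (hmemW u).mpr ⟨(hmem u).mp huR, h⟩)
    intro v hvR
    obtain ⟨c, hc⟩ : ∃ c : K, c ^ 2 = Q v / Q u := by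
      obtain ⟨c, hc⟩ := (frobeniusEquiv K 2).surjective (Q v / Q u)
      exact ⟨c, by simpa [frobeniusEquiv_apply, frobenius_def] using hc⟩
    have hmem0 : v + c • u ∈ W := by
      refine (hmemW _).mpr ⟨fun x => ?_, ?_⟩
      · rw [polar_add_left, polar_smul_left, (hmem v).mp hvR, (hmem u).mp huR]
        simp
      · rw [hQadd, QuadraticMap.map_smul, polar_comm,
          polar_smul_left, (hmem u).mp huR v, smul_zero, add_zero, smul_eq_mul]
        have hcc : c * c * Q u = Q v := by
          rw [← pow_two, hc, div_mul_eq_mul_div, mul_div_assoc, div_self hQu, mul_one]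
        rw [hcc]
        have h2 : Q v + Q v = 2 * Q v := by ring
        rw [h2, htwo, zero_mul]
    rw [hWbot, Submodule.mem_bot] at hmem0
    have hvu : v = -(c • u) := by linear_combination (norm := abel) hmem0
    rw [hvu]
    exact Submodule.neg_mem _ (Submodule.smul_mem _ _ (Submodule.mem_span_singleton_self u))
  have hRdim : finrank K ↥R ≤ 1 := by
    by_cases hRbot : R = ⊥
    · rw [hRbot, finrank_bot]; omega
    · obtain ⟨u, huR, hu0⟩ := Submodule.exists_mem_ne_zero_of_ne_bot hRbot
      calc finrank K ↥R ≤ finrank K ↥(Submodule.span K {u}) :=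
            Submodule.finrank_mono (hRle u huR hu0)
        _ = 1 := finrank_span_singleton hu0
  -- parity
  have halt : ∀ x : V, (polarBilin Q) x x = 0 := by
    intro x
    have := polar_self Q x
    simpa [two_smul, ← two_mul, htwo] using this
  have hpar := alt_parity (finrank K V) V rfl (polarBilin Q) halt
  -- characterize existence of nonzero degenerate vector
  have hchar1 : (∃ v : V, v ≠ 0 ∧ ∀ u : V, polar Q v u = 0) ↔ finrank K ↥R = 1 := by
    constructor
    · rintro ⟨v, hv0, hv⟩
      have hvR : v ∈ R := (hmem v).mpr hv
      have : 1 ≤ finrank K ↥R := by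
        have : R ≠ ⊥ := fun h => hv0 (by simpa [h] using hvR)
        have := Submodule.one_le_finrank_iff.mpr this
        omega
      omega
    · intro h
      have : R ≠ ⊥ := by
        intro hb
        rw [hb, finrank_bot] at h
        omega
      obtain ⟨v, hvR, hv0⟩ := Submodule.exists_mem_ne_zero_of_ne_bot this
      exact ⟨v, hv0, (hmem v).mp hvR⟩
  constructor
  · rw [hchar1]
    constructor
    · intro h
      rw [Nat.odd_iff, ← hpar, ← hR, h]
    · intro h
      rw [Nat.odd_iff] at h
      rw [← hR] at hpar
      omega
  · intro h
    rw [Nat.odd_iff] at h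
    rw [← hR] at hpar
    omega
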